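/- Uniqueness of fixed points modulo bisimulation: suppose the formula φ is modalised in the variable p and ψ is a formula with ψ ≃ φ[p:ψ]. Then ψ ≃ Ϝp.φ. -/

import Mathlib

/-!
Cyclic syntax for Cyclic Henkin Logic (Visser, "Cyclic Henkin Logic").

A graph is a directed pointed labeled graph with ordered successors;
formulas of the cyclic modal language `𝕃°` are such graphs over the
modal labels, whose box-occurrences guard all cycles.
-/


theorem finite_option {α : Type} (h : Finite α) : Finite (Option α) := by
  haveI := h
  haveI : Fintype α := Fintype.ofFinite _
  exact Finite.of_fintype _

/-- Directed pointed labeled graphs with ordered successors over a label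
set `L` with arity function `ar`.  The vertex set is finite. -/
structure RGraph (L : Type) (ar : L → ℕ) : Type 1 where
  V : Type
  fin : Finite V
  root : V
  label : V → L
  succ : (a : V) → Fin (ar (label a)) → V

namespace RGraph

variable {L : Type} {ar : L → ℕ}

/-- The edge relation `a Ŝ b`. -/
def Edge (G : RGraph L ar) (a b : G.V) : Prop := ∃ i, G.succ a i = b

/-- Every vertex is reachable from the root by a finite path. -/
def Reachable (G : RGraph L ar) : Prop :=
  ∀ a, Relation.ReflTransGen G.Edge G.root a

/-- `C` is a cycle: its elements can be arranged in a closed path of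
pairwise distinct vertices. -/
def IsCycle (G : RGraph L ar) (C : Set G.V) : Prop :=
  ∃ (k : ℕ) (f : Fin (k + 1) → G.V), Function.Injective f ∧ Set.range f = C ∧
    (∀ i : Fin k, G.Edge (f i.castSucc) (f i.succ)) ∧ G.Edge (f (Fin.last k)) (f 0)

/-- A guard: a set of vertices meeting every cycle. -/
def IsGuard (G : RGraph L ar) (W : Set G.V) : Prop :=
  ∀ C, G.IsCycle C → (C ∩ W).Nonempty

/-- The number of cycles `c(G)`. -/
noncomputable def numCycles (G : RGraph L ar) : ℕ :=
  Set.ncard {C : Set G.V | G.IsCycle C}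

/-- A vertex on a cycle. -/
def OnCycle (G : RGraph L ar) (a : G.V) : Prop := ∃ C, G.IsCycle C ∧ a ∈ C

/-- The root is a cycle vertex. -/
def RootOnCycle (G : RGraph L ar) : Prop := G.OnCycle G.root

/-- Acyclic graphs. -/
def Acyclic (G : RGraph L ar) : Prop := ∀ C, ¬ G.IsCycle C

/-- Bisimulations between graphs. -/
def IsBisim (G G' : RGraph L ar) (R : G.V → G'.V → Prop) : Prop :=
  ∀ a a', R a a' → ∃ h : G.label a = G'.label a',
    ∀ i : Fin (ar (G.label a)),
      R (G.succ a i) (G'.succ a' (Fin.cast (congrArg ar h) i))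

/-- Bisimilarity `G ≃ G'`: some bisimulation relates the roots. -/
def Bisim (G G' : RGraph L ar) : Prop :=
  ∃ R, G.IsBisim G' R ∧ R G.root G'.root

/-- Isomorphism `G ≅ G'`: a bijective bisimulation relating the roots. -/
def Iso (G G' : RGraph L ar) : Prop :=
  ∃ e : G.V ≃ G'.V, G.IsBisim G' (fun a b => e a = b) ∧ e G.root = G'.root

end RGraph

/-- Labels for the cyclic modal language `𝕃°`. -/
inductive FLab : Type
  | top | bot | var (n : ℕ) | neg | box | and | or | imp
deriving DecidableEq

/-- Arities of the labels. -/
@[reducible] def FLab.ar : FLab → ℕ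
  | .top => 0 | .bot => 0 | .var _ => 0
  | .neg => 1 | .box => 1
  | .and => 2 | .or => 2 | .imp => 2

/-- Raw formulas of `𝕃°`: graphs over the modal labels. -/
abbrev Fm := RGraph FLab FLab.ar

namespace Fm

/-- `p` occurs in `φ`. -/
def Occurs (φ : Fm) (p : ℕ) : Prop := ∃ a, φ.label a = .var p

/-- The set `bo(φ)` of box-occurrences. -/
def boOcc (φ : Fm) : Set φ.V := {a | φ.label a = .box}

/-- The guard condition: every cycle contains a box-occurrence. -/
def Guarded (φ : Fm) : Prop := φ.IsGuard φ.boOcc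

/-- `φ` is a formula: a (rooted, reachable) graph whose box-occurrences
form a guard. -/
def WF (φ : Fm) : Prop := φ.Reachable ∧ φ.Guarded

/-- An edge leaving a non-box vertex. -/
def EdgeNB (φ : Fm) (a b : φ.V) : Prop := φ.Edge a b ∧ φ.label a ≠ .box

/-- `φ` is modalised in `p`: every path from the root to a `p`-occurrence
passes through a box-occurrence. -/
def Modalised (φ : Fm) (p : ℕ) : Prop :=
  ∀ a, Relation.ReflTransGen φ.EdgeNB φ.root a → φ.label a ≠ .var p

theorem Modalised.root_ne {φ : Fm} {p : ℕ} (h : φ.Modalised p) :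
    φ.label φ.root ≠ .var p :=
  h φ.root Relation.ReflTransGen.refl

/-! ### Operations on formulas -/

/-- One-point graph with a 0-ary label. -/
def ofLab0 (l : FLab) : Fm where
  V := PUnit
  fin := inferInstance
  root := .unit
  label := fun _ => l
  succ := fun _ _ => .unit

def topFm : Fm := ofLab0 .top
def botFm : Fm := ofLab0 .bot
def varFm (n : ℕ) : Fm := ofLab0 (.var n)

def lab1 (l : FLab) (φ : Fm) : Option φ.V → FLab
  | none => l
  | some a => φ.label a

/-- Add a fresh root with 1-ary label `l` above `φ`. -/
def ofLab1 (l : FLab) (φ : Fm) : Fm where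
  V := Option φ.V
  fin := finite_option φ.fin
  root := none
  label := lab1 l φ
  succ := fun a => match a with
    | none => fun _ => some φ.root
    | some b => fun i => some (φ.succ b i)

def neg (φ : Fm) : Fm := ofLab1 .neg φ
def box (φ : Fm) : Fm := ofLab1 .box φ

def lab2 (l : FLab) (φ ψ : Fm) : Option (φ.V ⊕ ψ.V) → FLab
  | none => l
  | some (.inl a) => φ.label a
  | some (.inr b) => ψ.label b

/-- Add a fresh root with 2-ary label `l` above the disjoint sum of `φ`, `ψ`. -/
def ofLab2 (l : FLab) (φ ψ : Fm) : Fm where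
  V := Option (φ.V ⊕ ψ.V)
  fin := finite_option (by haveI := φ.fin; haveI := ψ.fin; exact inferInstance)
  root := none
  label := lab2 l φ ψ
  succ := fun a => match a with
    | none => fun i => if (i : ℕ) = 0 then some (.inl φ.root) else some (.inr ψ.root)
    | some (.inl a) => fun i => some (.inl (φ.succ a i))
    | some (.inr b) => fun i => some (.inr (ψ.succ b i))

def and (φ ψ : Fm) : Fm := ofLab2 .and φ ψ
def or (φ ψ : Fm) : Fm := ofLab2 .or φ ψ
def imp (φ ψ : Fm) : Fm := ofLab2 .imp φ ψ

/-- `φ ↔ ψ` as `(φ→ψ) ∧ (ψ→φ)`. -/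
def iff (φ ψ : Fm) : Fm := Fm.and (Fm.imp φ ψ) (Fm.imp ψ φ)

/-- The fixed point `Ϝp.φ`: identify the root with all `p`-occurrences,
keeping the label of the root.  (The root is not a `p`-occurrence, e.g.
because `φ` is modalised in `p`.) -/
def fix (φ : Fm) (p : ℕ) (h : φ.label φ.root ≠ .var p) : Fm where
  V := {a : φ.V // φ.label a ≠ .var p}
  fin := by haveI := φ.fin; exact inferInstance
  root := ⟨φ.root, h⟩
  label := fun a => φ.label a.1
  succ := fun a i =>
    if hb : φ.label (φ.succ a.1 i) = .var p then ⟨φ.root, h⟩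
    else ⟨φ.succ a.1 i, hb⟩

/-! ### Substitution -/

def varIdx : FLab → Option ℕ
  | .var q => some q
  | _ => none

/-- The copy of `σ q` hanging at a `q`-occurrence. -/
def copyT (σ : ℕ → Fm) : Option ℕ → Type
  | some q => (σ q).V
  | none => PUnit

theorem copyT_finite (σ : ℕ → Fm) : ∀ o, Finite (copyT σ o)
  | some q => (σ q).fin
  | none => show Finite PUnit from inferInstance

def copyRoot (σ : ℕ → Fm) : ∀ o, copyT σ o
  | some q => (σ q).root
  | none => .unit

def copyLabel (σ : ℕ → Fm) (d : FLab) : ∀ o, copyT σ o → FLab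
  | some q, b => (σ q).label b
  | none, _ => d

/-- Vertices of the substitution `φσ`. -/
def SubV (φ : Fm) (σ : ℕ → Fm) : Type :=
  Σ a : φ.V, copyT σ (varIdx (φ.label a))

def substSucc (φ : Fm) (σ : ℕ → Fm) (a : φ.V) :
    ∀ (o : Option ℕ), o = varIdx (φ.label a) → ∀ b : copyT σ o,
      Fin (copyLabel σ (φ.label a) o b).ar → SubV φ σ
  | some q, h, b, i => ⟨a, cast (congrArg (copyT σ) h) ((σ q).succ b i)⟩
  | none, _, _, i => ⟨φ.succ a i, copyRoot σ _⟩

/-- Simultaneous substitution: every `q`-occurrence of `φ` is identified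
with the root of a disjoint copy of `σ q`, keeping the label of the root
of `σ q`. -/
def subst (φ : Fm) (σ : ℕ → Fm) : Fm where
  V := SubV φ σ
  fin := by
    haveI := φ.fin
    haveI : ∀ a : φ.V, Finite (copyT σ (varIdx (φ.label a))) :=
      fun a => copyT_finite σ _
    exact (inferInstance : Finite (Σ a : φ.V, copyT σ (varIdx (φ.label a))))
  root := ⟨φ.root, copyRoot σ _⟩
  label := fun x => copyLabel σ (φ.label x.1) _ x.2
  succ := fun x => substSucc φ σ x.1 _ rfl x.2

/-- Substitution of a single variable, `φ[p:ψ]`. -/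
def subst1 (φ : Fm) (p : ℕ) (ψ : Fm) : Fm :=
  φ.subst (fun q => if q = p then ψ else varFm q)

/-! ### Snip -/

-- Redirect all incoming edges of the root to a new leaf labeled `p`.
open Classical in
noncomputable def snipC (φ : Fm) (p : ℕ) : Fm where
  V := Option φ.V
  fin := finite_option φ.fin
  root := some φ.root
  label := lab1 (.var p) φ
  succ := fun a => match a with
    | none => Fin.elim0
    | some a => fun i =>
        if φ.succ a i = φ.root then none else some (φ.succ a i)

-- `snip(φ,p)`: if the root is on a cycle, redirect all incoming edges
-- of the root to a new leaf labeled `p`; otherwise `φ` itself.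
open Classical in
noncomputable def snip (φ : Fm) (p : ℕ) : Fm :=
  if φ.RootOnCycle then φ.snipC p else φ

/-- `snip(φ,ψ) := snip(φ,p)[p:ψ]` (for a variable `p` not occurring in `φ`). -/
noncomputable def snipF (φ : Fm) (p : ℕ) (ψ : Fm) : Fm :=
  (φ.snip p).subst1 p ψ

theorem snip_root_ne {φ : Fm} {p : ℕ} (h : φ.RootOnCycle) (hp : ¬ φ.Occurs p) :
    (φ.snip p).label (φ.snip p).root ≠ .var p := by
  rw [snip, if_pos h]
  exact fun hc => hp ⟨φ.root, hc⟩

/-! ### The transitive closure modality `□•φ := Ϝp.□(φ∧p)` -/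

def bslab (φ : Fm) : Option (Option φ.V) → FLab
  | none => .box
  | some none => .and
  | some (some a) => φ.label a

/-- `□•φ := Ϝp.□(φ∧p)`, for `p` not occurring in `φ`: a box-root whose
`∧`-successor returns to the box-root. -/
def boxStar (φ : Fm) : Fm where
  V := Option (Option φ.V)
  fin := finite_option (finite_option φ.fin)
  root := none
  label := bslab φ
  succ := fun a => match a with
    | none => fun _ => some none
    | some none => fun i => if (i : ℕ) = 0 then some (some φ.root) else none
    | some (some a) => fun i => some (some (φ.succ a i))

/-- `⊡•φ := φ ∧ □•φ`. -/
def boxDotStar (φ : Fm) : Fm := Fm.and φ (boxStar φ)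

/-- Finite conjunctions. -/
def bigAnd : List Fm → Fm
  | [] => topFm
  | φ :: l => Fm.and φ (bigAnd l)

/-- Apply a label, as a connective, to arguments. -/
def applyLab : (l : FLab) → (Fin l.ar → Fm) → Fm
  | .top, _ => topFm
  | .bot, _ => botFm
  | .var n, _ => varFm n
  | .neg, f => neg (f 0)
  | .box, f => box (f 0)
  | .and, f => Fm.and (f 0) (f 1)
  | .or, f => Fm.or (f 0) (f 1)
  | .imp, f => Fm.imp (f 0) (f 1)

/-- First successor (defaulting to `a` itself at leaves). -/
def succ0 (φ : Fm) (a : φ.V) : φ.V :=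
  if h : 0 < (φ.label a).ar then φ.succ a ⟨0, h⟩ else a

/-- The subgraph of `φ` generated by `a`. -/
def restrict (φ : Fm) (a : φ.V) : Fm where
  V := {b : φ.V // Relation.ReflTransGen φ.Edge a b}
  fin := by haveI := φ.fin; exact inferInstance
  root := ⟨a, Relation.ReflTransGen.refl⟩
  label := fun b => φ.label b.1
  succ := fun b i => ⟨φ.succ b.1 i, b.2.tail ⟨i, rfl⟩⟩

/-- A variable not occurring in `φ`. -/
noncomputable def freshVar (φ : Fm) : ℕ := by
  classical
  haveI := φ.fin
  haveI : Fintype φ.V := Fintype.ofFinite _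
  exact Finset.univ.sup fun a => match φ.label a with | .var q => q + 1 | _ => 0

/-- `snip(φ,⊤)`. -/
noncomputable def snipTop (φ : Fm) : Fm := φ.snipF φ.freshVar topFm

/-- The list of box-occurrences of `φ`. -/
noncomputable def boxOccList (φ : Fm) : List φ.V := by
  classical
  haveI := φ.fin
  haveI : Fintype φ.V := Fintype.ofFinite _
  exact (Finset.univ.filter fun a => φ.label a = FLab.box).toList

end Fm

/-! ### Propositional tautologies (as parse trees) -/

inductive PForm : Type
  | var (n : ℕ) | top | bot
  | neg (A : PForm) | and (A B : PForm) | or (A B : PForm) | imp (A B : PForm)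

def PForm.eval (v : ℕ → Bool) : PForm → Bool
  | .var n => v n
  | .top => true
  | .bot => false
  | .neg A => !A.eval v
  | .and A B => A.eval v && B.eval v
  | .or A B => A.eval v || B.eval v
  | .imp A B => !A.eval v || B.eval v

/-- Propositional tautology. -/
def PForm.Taut (A : PForm) : Prop := ∀ v, A.eval v = true

/-- Substitution instance of a parse tree by formulas of `𝕃°`. -/
def PForm.substFm (σ : ℕ → Fm) : PForm → Fm
  | .var n => σ n
  | .top => Fm.topFm
  | .bot => Fm.botFm
  | .neg A => Fm.neg (A.substFm σ)
  | .and A B => Fm.and (A.substFm σ) (B.substFm σ)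
  | .or A B => Fm.or (A.substFm σ) (B.substFm σ)
  | .imp A B => Fm.imp (A.substFm σ) (B.substFm σ)

/-! ### Cyclic Henkin Logic -/

/-- Cyclic Henkin Logic `CHL`: modus ponens, necessitation, substitution
instances of propositional tautologies, distribution, bisimilarity, and
Löb's Rule. -/
inductive CHL : Fm → Prop
  | mp {φ ψ : Fm} : CHL (Fm.imp φ ψ) → CHL φ → CHL ψ
  | nec {φ : Fm} : CHL φ → CHL (Fm.box φ)
  | taut {A : PForm} (σ : ℕ → Fm) : A.Taut → CHL (A.substFm σ)
  | k (φ ψ : Fm) : CHL (Fm.imp (Fm.box (Fm.imp φ ψ)) (Fm.imp (Fm.box φ) (Fm.box ψ)))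
  | bisim {φ ψ : Fm} : RGraph.Bisim φ ψ → CHL (Fm.iff φ ψ)
  | lob {φ : Fm} : CHL (Fm.imp (Fm.box φ) φ) → CHL φ

/-- `GL°`: `CHL` plus the axiom scheme `□φ → □□φ`. -/
inductive GLo : Fm → Prop
  | mp {φ ψ : Fm} : GLo (Fm.imp φ ψ) → GLo φ → GLo ψ
  | nec {φ : Fm} : GLo φ → GLo (Fm.box φ)
  | taut {A : PForm} (σ : ℕ → Fm) : A.Taut → GLo (A.substFm σ)
  | k (φ ψ : Fm) : GLo (Fm.imp (Fm.box (Fm.imp φ ψ)) (Fm.imp (Fm.box φ) (Fm.box ψ)))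
  | bisim {φ ψ : Fm} : RGraph.Bisim φ ψ → GLo (Fm.iff φ ψ)
  | lob {φ : Fm} : GLo (Fm.imp (Fm.box φ) φ) → GLo φ
  | four (φ : Fm) : GLo (Fm.imp (Fm.box φ) (Fm.box (Fm.box φ)))

/-- Löb's Logic `GL` on the acyclic formulas. -/
inductive GLlogic : Fm → Prop
  | mp {φ ψ : Fm} : GLlogic (Fm.imp φ ψ) → GLlogic φ → GLlogic ψ
  | nec {φ : Fm} : GLlogic φ → GLlogic (Fm.box φ)
  | taut {A : PForm} (σ : ℕ → Fm) : (∀ q, (σ q).Acyclic) → A.Taut → GLlogic (A.substFm σ)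
  | k (φ ψ : Fm) : φ.Acyclic → ψ.Acyclic →
      GLlogic (Fm.imp (Fm.box (Fm.imp φ ψ)) (Fm.imp (Fm.box φ) (Fm.box ψ)))
  | bisim {φ ψ : Fm} : φ.Acyclic → ψ.Acyclic → RGraph.Bisim φ ψ → GLlogic (Fm.iff φ ψ)
  | lob {φ : Fm} : φ.Acyclic → GLlogic (Fm.imp (Fm.box φ) φ) → GLlogic φ
  | four (φ : Fm) : φ.Acyclic → GLlogic (Fm.imp (Fm.box φ) (Fm.box (Fm.box φ)))

/-! ### Systems of equations -/

/-- The system `ℰ` (given by `E` on the finite variable set `Q`) is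
modalised: its dependency graph is acyclic. -/
def SysModalised (Q : Finset ℕ) (E : ℕ → Fm) : Prop :=
  ∀ q ∈ Q, ¬ Relation.TransGen
      (fun x y => x ∈ Q ∧ y ∈ Q ∧ ¬ (E x).Modalised y) q q

/-- The substitution determined by a solution candidate `F` on `Q`. -/
def sysSubst (Q : Finset ℕ) (F : ℕ → Fm) : ℕ → Fm :=
  fun q => if q ∈ Q then F q else Fm.varFm q

/-- `F` solves the system `E` on `Q`. -/
def IsSolution (Q : Finset ℕ) (E : ℕ → Fm) (F : ℕ → Fm) : Prop :=
  (∀ q ∈ Q, (F q).WF) ∧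
  (∀ q ∈ Q, ∀ q' ∈ Q, ¬ (F q).Occurs q') ∧
  (∀ q ∈ Q, RGraph.Bisim (F q) ((E q).subst (sysSubst Q F)))

/-! ### Local translations -/

/-- A local translation of the formula `φ` into the logic `Λ`. -/
def IsLocalTranslation (Λ : Fm → Prop) (φ : Fm) (T : φ.V → Fm) : Prop :=
  ∀ a : φ.V, Λ (Fm.iff (T a) (Fm.applyLab (φ.label a) (fun i => T (φ.succ a i))))

-- Substitution determined by a finite assignment.
open Classical in
noncomputable def substOf {ι : Type} (s : ι → ℕ) (ψ : ι → Fm) : ℕ → Fm :=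
  fun q => if h : ∃ i, s i = q then ψ h.choose else Fm.varFm q

/-- The characterising equations of the de Jongh–Sambin map `js*`,
defined by course-of-values recursion on the number of cycles and guard
recursion on the box-occurrences on a cycle. -/
def IsJsStar (jsS : (φ : Fm) → φ.V → Fm) : Prop :=
  (∀ (φ : Fm) (a : φ.V), ¬ (φ.label a = .box ∧ φ.OnCycle a) →
      jsS φ a = Fm.applyLab (φ.label a) (fun i => jsS φ (φ.succ a i))) ∧
  (∀ (φ : Fm) (a : φ.V), φ.label a = .box → φ.OnCycle a →
      jsS φ a = jsS (Fm.snipTop (φ.restrict a)) (Fm.snipTop (φ.restrict a)).root) ∧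
  (∀ (φ : Fm) (a : φ.V), (jsS φ a).Acyclic)

section FixUniqueAux

/-- The substitution used in `subst1`. -/
def sigf (ψ : Fm) (p : ℕ) : ℕ → Fm := fun q => if q = p then ψ else Fm.varFm q

theorem sigf_p (ψ : Fm) (p : ℕ) : sigf ψ p p = ψ := if_pos rfl

theorem varIdx_eq_some {l : FLab} {q : ℕ} (h : Fm.varIdx l = some q) : l = .var q := by
  cases l <;> simp_all [Fm.varIdx]

theorem copyT_eq {φ ψ : Fm} {p : ℕ} {a : φ.V} (ha : φ.label a = .var p) :
    ψ.V = Fm.copyT (sigf ψ p) (Fm.varIdx (φ.label a)) := by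
  rw [ha]
  show ψ.V = (sigf ψ p p).V
  rw [sigf_p]

/-- The copy of `ψ.V` sitting at a `p`-occurrence. -/
def castPsi {φ ψ : Fm} {p : ℕ} {a : φ.V} (ha : φ.label a = .var p) (c : ψ.V) :
    Fm.copyT (sigf ψ p) (Fm.varIdx (φ.label a)) := cast (copyT_eq ha) c

theorem castPsi_heq {φ ψ : Fm} {p : ℕ} {a : φ.V} (ha : φ.label a = .var p) (c : ψ.V) :
    HEq (castPsi ha c) c := cast_heq _ _

theorem label_transport {χ ψ : Fm} (h : χ = ψ) {c₀ : χ.V} {c : ψ.V} (hc : HEq c₀ c) :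
    χ.label c₀ = ψ.label c := by subst h; rw [eq_of_heq hc]

theorem root_transport {χ ψ : Fm} (h : χ = ψ) : HEq χ.root ψ.root := by subst h; rfl

theorem succ_transport {χ ψ : Fm} (h : χ = ψ) {c₀ : χ.V} {c : ψ.V} (hc : HEq c₀ c)
    {i : Fin (χ.label c₀).ar} {j : Fin (ψ.label c).ar} (hij : (i : ℕ) = (j : ℕ)) :
    HEq (χ.succ c₀ i) (ψ.succ c j) := by
  subst h; cases hc; cases Fin.ext hij; rfl

theorem copyLabel_congr (σ : ℕ → Fm) (d : FLab) {o o' : Option ℕ} (hoo : o = o')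
    {c : Fm.copyT σ o} {c' : Fm.copyT σ o'} (hc : HEq c c') :
    Fm.copyLabel σ d o c = Fm.copyLabel σ d o' c' := by
  subst hoo; cases hc; rfl

theorem copyRoot_congr (σ : ℕ → Fm) {o o' : Option ℕ} (hoo : o = o') :
    HEq (Fm.copyRoot σ o) (Fm.copyRoot σ o') := by subst hoo; rfl

theorem substSucc_congr (φ : Fm) (σ : ℕ → Fm) (a : φ.V) {o o' : Option ℕ}
    (h : o = Fm.varIdx (φ.label a)) (h' : o' = Fm.varIdx (φ.label a))
    {c : Fm.copyT σ o} {c' : Fm.copyT σ o'} (hc : HEq c c')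
    {i : Fin (Fm.copyLabel σ (φ.label a) o c).ar}
    {i' : Fin (Fm.copyLabel σ (φ.label a) o' c').ar} (hi : (i : ℕ) = (i' : ℕ)) :
    Fm.substSucc φ σ a o h c i = Fm.substSucc φ σ a o' h' c' i' := by
  have hoo : o = o' := h.trans h'.symm
  subst hoo; cases hc; cases Fin.ext hi; rfl

theorem subst_succ_def (φ : Fm) (σ : ℕ → Fm) (x : Fm.SubV φ σ)
    (i : Fin ((Fm.subst φ σ).label x).ar) :
    (Fm.subst φ σ).succ x i = Fm.substSucc φ σ x.1 _ rfl x.2 i := rfl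

theorem substSucc_none (φ : Fm) (σ : ℕ → Fm) (a : φ.V)
    (h : none = Fm.varIdx (φ.label a)) (c : Fm.copyT σ none)
    (i : Fin (Fm.copyLabel σ (φ.label a) none c).ar) :
    Fm.substSucc φ σ a none h c i =
      ⟨φ.succ a i, Fm.copyRoot σ (Fm.varIdx (φ.label (φ.succ a i)))⟩ := rfl

theorem substSucc_some (φ : Fm) (σ : ℕ → Fm) (a : φ.V) (q : ℕ)
    (h : some q = Fm.varIdx (φ.label a)) (c : Fm.copyT σ (some q))
    (i : Fin (Fm.copyLabel σ (φ.label a) (some q) c).ar) :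
    Fm.substSucc φ σ a (some q) h c i =
      ⟨a, cast (congrArg (Fm.copyT σ) h) ((σ q).succ c i)⟩ := rfl

theorem labvar_aux {q : ℕ} {χ : Fm} (h : χ = Fm.varFm q) (c : χ.V) :
    χ.label c = .var q := by subst h; rfl

theorem label_nonp {φ ψ : Fm} {p : ℕ} {a : φ.V} (ha : φ.label a ≠ .var p)
    (c : Fm.copyT (sigf ψ p) (Fm.varIdx (φ.label a))) :
    (Fm.subst φ (sigf ψ p)).label ⟨a, c⟩ = φ.label a := by
  show Fm.copyLabel (sigf ψ p) (φ.label a) (Fm.varIdx (φ.label a)) c = φ.label a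
  obtain hv | ⟨q, hv⟩ := Option.eq_none_or_eq_some (Fm.varIdx (φ.label a))
  case inl =>
      rw [copyLabel_congr (sigf ψ p) (φ.label a) hv
        (c' := cast (congrArg (Fm.copyT (sigf ψ p)) hv) c) (HEq.symm (cast_heq _ _))]
      rfl
  case inr =>
      have hq : φ.label a = .var q := varIdx_eq_some hv
      have hqp : q ≠ p := fun e => ha (e ▸ hq)
      rw [copyLabel_congr (sigf ψ p) (φ.label a) hv
        (c' := cast (congrArg (Fm.copyT (sigf ψ p)) hv) c) (HEq.symm (cast_heq _ _))]
      exact (labvar_aux (if_neg hqp) _).trans hq.symm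

theorem label_p {φ ψ : Fm} {p : ℕ} {a : φ.V} (ha : φ.label a = .var p) (c : ψ.V) :
    (Fm.subst φ (sigf ψ p)).label ⟨a, castPsi ha c⟩ = ψ.label c := by
  show Fm.copyLabel (sigf ψ p) (φ.label a) (Fm.varIdx (φ.label a)) (castPsi ha c) = ψ.label c
  have hv : Fm.varIdx (φ.label a) = some p := by rw [ha]; rfl
  rw [copyLabel_congr (sigf ψ p) (φ.label a) hv
    (c' := (cast (congrArg RGraph.V (sigf_p ψ p).symm) c : (sigf ψ p p).V))
    ((castPsi_heq ha c).trans (HEq.symm (cast_heq _ _)))]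
  show (sigf ψ p p).label _ = ψ.label c
  exact label_transport (sigf_p ψ p) (cast_heq _ _)

theorem copyRoot_p {φ ψ : Fm} {p : ℕ} {a : φ.V} (ha : φ.label a = .var p) :
    Fm.copyRoot (sigf ψ p) (Fm.varIdx (φ.label a)) = castPsi ha ψ.root := by
  have hv : Fm.varIdx (φ.label a) = some p := by rw [ha]; rfl
  apply eq_of_heq
  refine HEq.trans (copyRoot_congr (sigf ψ p) hv) ?_
  refine HEq.trans ?_ (HEq.symm (cast_heq _ _))
  show HEq (sigf ψ p p).root ψ.root
  exact root_transport (sigf_p ψ p)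

theorem succ_nonvar {φ ψ : Fm} {p : ℕ} {a : φ.V} (hv : Fm.varIdx (φ.label a) = none)
    (c : Fm.copyT (sigf ψ p) (Fm.varIdx (φ.label a)))
    (i : Fin ((Fm.subst φ (sigf ψ p)).label ⟨a, c⟩).ar)
    (j : Fin (φ.label a).ar) (hij : (i : ℕ) = (j : ℕ)) :
    (Fm.subst φ (sigf ψ p)).succ ⟨a, c⟩ i =
      ⟨φ.succ a j, Fm.copyRoot (sigf ψ p) (Fm.varIdx (φ.label (φ.succ a j)))⟩ := by
  show Fm.substSucc φ (sigf ψ p) a _ rfl c i = _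
  exact (substSucc_congr φ (sigf ψ p) a rfl hv.symm
    (HEq.symm (cast_heq (congrArg (Fm.copyT (sigf ψ p)) hv) c))
    (i' := (j : Fin (Fm.copyLabel (sigf ψ p) (φ.label a) none
      (cast (congrArg (Fm.copyT (sigf ψ p)) hv) c)).ar)) hij).trans rfl

theorem succ_p {φ ψ : Fm} {p : ℕ} {a : φ.V} (ha : φ.label a = .var p) (c : ψ.V)
    (i : Fin ((Fm.subst φ (sigf ψ p)).label ⟨a, castPsi ha c⟩).ar)
    (j : Fin (ψ.label c).ar) (hij : (i : ℕ) = (j : ℕ)) :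
    (Fm.subst φ (sigf ψ p)).succ ⟨a, castPsi ha c⟩ i = ⟨a, castPsi ha (ψ.succ c j)⟩ := by
  have hv : Fm.varIdx (φ.label a) = some p := by rw [ha]; rfl
  have hσ : sigf ψ p p = ψ := sigf_p ψ p
  show Fm.substSucc φ (sigf ψ p) a _ rfl (castPsi ha c) i = _
  set c₀ : (sigf ψ p p).V := cast (congrArg RGraph.V hσ.symm) c with hc₀
  have hlab : (sigf ψ p p).label c₀ = ψ.label c := label_transport hσ (cast_heq _ _)
  refine (substSucc_congr φ (sigf ψ p) a rfl hv.symm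
    (c' := (c₀ : Fm.copyT (sigf ψ p) (some p)))
    ((castPsi_heq ha c).trans (HEq.symm (cast_heq _ _)))
    (i' := (Fin.cast (congrArg FLab.ar hlab.symm) j :
      Fin (Fm.copyLabel (sigf ψ p) (φ.label a) (some p) c₀).ar))
    (by simp [hij])).trans ?_
  refine (substSucc_some φ (sigf ψ p) a p hv.symm c₀ _).trans ?_
  apply congrArg (Sigma.mk a)
  apply eq_of_heq
  refine HEq.trans (cast_heq _ _) ?_
  refine HEq.trans ?_ (HEq.symm (cast_heq _ _))
  exact succ_transport hσ (cast_heq _ _) (by simp)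

theorem fix_label (φ : Fm) (p : ℕ) (hr : φ.label φ.root ≠ .var p)
    (x : (φ.fix p hr).V) : (φ.fix p hr).label x = φ.label x.1 := rfl

theorem fix_succ (φ : Fm) (p : ℕ) (hr : φ.label φ.root ≠ .var p)
    (x : (φ.fix p hr).V) (i : Fin ((φ.fix p hr).label x).ar) :
    (φ.fix p hr).succ x i =
      if hb : φ.label (φ.succ x.1 i) = .var p then ⟨φ.root, hr⟩
      else ⟨φ.succ x.1 i, hb⟩ := rfl

/-- The bisimulation between `ψ` and `Ϝp.φ` generated by a bisimulation
`R` between `ψ` and `φ[p:ψ]`. -/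
inductive FixRel (φ ψ : Fm) (p : ℕ) (hr : φ.label φ.root ≠ .var p)
    (R : ψ.V → (Fm.subst φ (sigf ψ p)).V → Prop) : ψ.V → (φ.fix p hr).V → Prop
  | base (b : ψ.V) (a : φ.V) (ha : φ.label a ≠ .var p)
      (c : Fm.copyT (sigf ψ p) (Fm.varIdx (φ.label a))) :
      R b ⟨a, c⟩ → FixRel φ ψ p hr R b ⟨a, ha⟩
  | step (b : ψ.V) (a : φ.V) (ha : φ.label a = .var p) (c : ψ.V) (y : (φ.fix p hr).V) :
      R b ⟨a, castPsi ha c⟩ → FixRel φ ψ p hr R c y → FixRel φ ψ p hr R b y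

theorem rel_isBisim {φ ψ : Fm} {p : ℕ} (hr : φ.label φ.root ≠ .var p)
    {R : ψ.V → (Fm.subst φ (sigf ψ p)).V → Prop}
    (hR : RGraph.IsBisim ψ (Fm.subst φ (sigf ψ p)) R)
    (hroot : R ψ.root (Fm.subst φ (sigf ψ p)).root) :
    RGraph.IsBisim ψ (φ.fix p hr) (FixRel φ ψ p hr R) := by
  have hrel_root : FixRel φ ψ p hr R ψ.root ⟨φ.root, hr⟩ :=
    FixRel.base _ _ hr _ hroot
  intro b y hby
  induction hby with
  | base b a ha c hbc =>
      obtain ⟨hl, hs⟩ := hR b ⟨a, c⟩ hbc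
      have hl2 : (Fm.subst φ (sigf ψ p)).label ⟨a, c⟩ = φ.label a := label_nonp ha c
      refine ⟨hl.trans hl2, ?_⟩
      intro i
      obtain hv | ⟨q, hv⟩ := Option.eq_none_or_eq_some (Fm.varIdx (φ.label a))
      case inr =>
          have hz : FLab.ar (ψ.label b) = 0 := by
            rw [hl.trans hl2, varIdx_eq_some hv]
          have := i.isLt
          exact absurd (by omega : i.val < 0) (Nat.not_lt_zero _)
      case inl =>
          have hsi := hs i
          set j : Fin (FLab.ar (φ.label a)) :=
            Fin.cast (congrArg FLab.ar (hl.trans hl2)) i with hj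
          rw [succ_nonvar hv c _ j rfl] at hsi
          show FixRel φ ψ p hr R (ψ.succ b i)
            (if hb : φ.label (φ.succ a j) = .var p then (⟨φ.root, hr⟩ : (φ.fix p hr).V)
              else (⟨φ.succ a j, hb⟩ : (φ.fix p hr).V))
          by_cases hb : φ.label (φ.succ a j) = .var p
          · refine cast (congrArg (FixRel φ ψ p hr R (ψ.succ b i)) (dif_pos hb).symm) ?_
            rw [copyRoot_p hb] at hsi
            exact FixRel.step _ _ hb _ _ hsi hrel_root
          · refine cast (congrArg (FixRel φ ψ p hr R (ψ.succ b i)) (dif_neg hb).symm) ?_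
            exact FixRel.base _ _ hb _ hsi
  | step b a ha c y hbc hcy IH =>
      obtain ⟨hl1, hs⟩ := hR b ⟨a, castPsi ha c⟩ hbc
      have hl2 : (Fm.subst φ (sigf ψ p)).label ⟨a, castPsi ha c⟩ = ψ.label c :=
        label_p ha c
      obtain ⟨hl3, hIH⟩ := IH
      refine ⟨(hl1.trans hl2).trans hl3, ?_⟩
      intro i
      have hsi := hs i
      set j : Fin (FLab.ar (ψ.label c)) :=
        Fin.cast (congrArg FLab.ar (hl1.trans hl2)) i with hj
      rw [succ_p ha c _ j rfl] at hsi
      have h2 := hIH j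
      have hidx : Fin.cast (congrArg FLab.ar hl3) j =
          Fin.cast (congrArg FLab.ar ((hl1.trans hl2).trans hl3)) i := by
        apply Fin.ext; rfl
      rw [hidx] at h2
      exact FixRel.step _ _ ha _ _ hsi h2

end FixUniqueAux

/-- **Uniqueness of fixed points modulo bisimulation** (Theorem
`unibis`): if `φ` is modalised in `p` and `ψ ≃ φ[p:ψ]`, then
`ψ ≃ Ϝp.φ`. -/
theorem fixpoint_unique_bisim (φ ψ : Fm) (p : ℕ) (hφ : φ.WF) (hψ : ψ.WF)
    (hmod : φ.Modalised p) (h : RGraph.Bisim ψ (φ.subst1 p ψ)) :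
    RGraph.Bisim ψ (φ.fix p hmod.root_ne) := by
  obtain ⟨R, hR, hroot⟩ := h
  exact ⟨FixRel φ ψ p hmod.root_ne R, rel_isBisim hmod.root_ne hR hroot,
    FixRel.base _ _ hmod.root_ne _ hroot⟩
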